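/- Define f : ℝ → ℝ by f(x) = (1 + e^{−x}) exp(x/(1 + e^x)). Then for every x, f is differentiable at x with f'(x) = −(x/(1 + e^x)) exp(x/(1 + e^x)); in particular f'(x) < 0 for all x > 0, so f is strictly decreasing on (0, ∞). -/

import Mathlib

open Set

lemma stmt16_deriv (x : ℝ) : HasDerivAt
    (fun x : ℝ => (1 + Real.exp (-x)) * Real.exp (x / (1 + Real.exp x)))
    (-(x / (1 + Real.exp x)) * Real.exp (x / (1 + Real.exp x))) x := by
  have hx : (0:ℝ) < 1 + Real.exp x := by positivity
  have hu : HasDerivAt (fun x : ℝ => x / (1 + Real.exp x))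
      ((1 * (1 + Real.exp x) - x * Real.exp x) / (1 + Real.exp x)^2) x := by
    have h := (hasDerivAt_id x).div ((hasDerivAt_const x 1).add (Real.hasDerivAt_exp x)) (ne_of_gt hx)
    exact h.congr_deriv (by simp only [Pi.add_apply, id]; ring)
  have he : HasDerivAt (fun x : ℝ => Real.exp (x / (1 + Real.exp x)))
      (Real.exp (x / (1 + Real.exp x)) *
        ((1 * (1 + Real.exp x) - x * Real.exp x) / (1 + Real.exp x)^2)) x :=
    (Real.hasDerivAt_exp _).comp x hu
  have hg : HasDerivAt (fun x : ℝ => 1 + Real.exp (-x)) (-Real.exp (-x)) x := by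
    have := (Real.hasDerivAt_exp (-x)).comp x ((hasDerivAt_id x).neg)
    exact ((hasDerivAt_const x 1).add this).congr_deriv (by ring)
  have := hg.mul he
  refine this.congr_deriv ?_
  have hne : (1 + Real.exp x) ≠ 0 := ne_of_gt hx
  rw [Real.exp_neg]
  field_simp
  ring

theorem stmt16 :
    (∀ x : ℝ, HasDerivAt
      (fun x : ℝ => (1 + Real.exp (-x)) * Real.exp (x / (1 + Real.exp x)))
      (-(x / (1 + Real.exp x)) * Real.exp (x / (1 + Real.exp x))) x) ∧
    (∀ x : ℝ, 0 < x →
      -(x / (1 + Real.exp x)) * Real.exp (x / (1 + Real.exp x)) < 0) ∧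
    StrictAntiOn
      (fun x : ℝ => (1 + Real.exp (-x)) * Real.exp (x / (1 + Real.exp x)))
      (Ioi 0) := by
  have hneg : ∀ x : ℝ, 0 < x →
      -(x / (1 + Real.exp x)) * Real.exp (x / (1 + Real.exp x)) < 0 := by
    intro x hxpos
    have h1 : 0 < x / (1 + Real.exp x) := by positivity
    have h2 : 0 < Real.exp (x / (1 + Real.exp x)) := Real.exp_pos _
    nlinarith
  refine ⟨stmt16_deriv, hneg, ?_⟩
  apply strictAntiOn_of_deriv_neg (convex_Ioi 0)
  · exact fun x _ => (stmt16_deriv x).differentiableAt.continuousAt.continuousWithinAt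
  · intro x hx
    rw [interior_Ioi] at hx
    rw [(stmt16_deriv x).deriv]
    exact hneg x hx
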